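/- Let G be a graph whose Gallai–Edmonds decomposition is (D₁, …, D_r; A; C). If A is non-empty, then the number r of components of D is strictly greater than |A|. -/

import Mathlib

attribute [local instance] Classical.propDecidable

variable {V : Type} [Fintype V] [DecidableEq V]

/-- A matching in a simple graph `G`: a finite set of edges of `G`, pairwise vertex-disjoint. -/
def IsGMatching (G : SimpleGraph V) (M : Finset (Sym2 V)) : Prop :=
  (∀ e ∈ M, e ∈ G.edgeSet) ∧ ∀ e ∈ M, ∀ f ∈ M, e ≠ f → ∀ v, v ∈ e → v ∉ f

/-- The matching number `ν(G)` of a simple graph. -/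
noncomputable def gnu (G : SimpleGraph V) : ℕ :=
  ((Finset.univ : Finset (Sym2 V)).powerset.filter fun M => IsGMatching G M).sup Finset.card

/-- The graph `G - v`: delete the vertex `v` (i.e. all edges incident to it). -/
def delV (G : SimpleGraph V) (v : V) : SimpleGraph V where
  Adj x y := G.Adj x y ∧ x ≠ v ∧ y ≠ v
  symm := ⟨fun _ _ ⟨h, hx, hy⟩ => ⟨h.symm, hy, hx⟩⟩
  loopless := ⟨fun x h => G.loopless.irrefl x h.1⟩

/-- The Gallai–Edmonds set `D(G) = {v : ν(G - v) = ν(G)}`. -/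
def Dset (G : SimpleGraph V) : Set V := {v | gnu (delV G v) = gnu G}

/-- The Gallai–Edmonds set `A(G) = N_G(D(G))`. -/
def Aset (G : SimpleGraph V) : Set V := {w | w ∉ Dset G ∧ ∃ d ∈ Dset G, G.Adj w d}

/-- The Gallai–Edmonds set `C(G) = V \ (D(G) ∪ A(G))`. -/
def Cset (G : SimpleGraph V) : Set V := (Dset G ∪ Aset G)ᶜ

/-- Reachability inside the induced subgraph `G[S]` (same component of `G[S]`). -/
def reachOn (G : SimpleGraph V) (S : Set V) : V → V → Prop :=
  Relation.ReflTransGen fun a b => G.Adj a b ∧ a ∈ S ∧ b ∈ S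

set_option maxHeartbeats 1000000
set_option linter.unusedSectionVars false

/-- `v` is covered by the matching `M`. -/
def cov (M : Finset (Sym2 V)) (v : V) : Prop := ∃ e ∈ M, v ∈ e

lemma cov_mono {M N : Finset (Sym2 V)} (h : M ⊆ N) {v : V} (hv : cov M v) : cov N v := by
  obtain ⟨e, he, hve⟩ := hv; exact ⟨e, h he, hve⟩

lemma matching_eq_of_mem {G : SimpleGraph V} {M : Finset (Sym2 V)} (hM : IsGMatching G M)
    {e f : Sym2 V} (he : e ∈ M) (hf : f ∈ M) {v : V} (hve : v ∈ e) (hvf : v ∈ f) : e = f := by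
  by_contra hne
  exact hM.2 e he f hf hne v hve hvf

lemma matching_subset {G : SimpleGraph V} {M N : Finset (Sym2 V)} (h : N ⊆ M)
    (hM : IsGMatching G M) : IsGMatching G N :=
  ⟨fun e he => hM.1 e (h he), fun e he f hf hne v hv => hM.2 e (h he) f (h hf) hne v hv⟩

lemma matching_mono {G H : SimpleGraph V} (hGH : G ≤ H) {M : Finset (Sym2 V)}
    (hM : IsGMatching G M) : IsGMatching H M :=
  ⟨fun e he => SimpleGraph.edgeSet_mono hGH (hM.1 e he), hM.2⟩

lemma card_le_gnu {G : SimpleGraph V} {M : Finset (Sym2 V)} (hM : IsGMatching G M) :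
    M.card ≤ gnu G := by
  apply Finset.le_sup
  simp only [Finset.mem_filter, Finset.mem_powerset]
  exact ⟨Finset.subset_univ M, hM⟩

lemma exists_max_matching (G : SimpleGraph V) :
    ∃ M, IsGMatching G M ∧ M.card = gnu G := by
  have hne : ((Finset.univ : Finset (Sym2 V)).powerset.filter fun M => IsGMatching G M).Nonempty := by
    refine ⟨∅, ?_⟩
    simp only [Finset.mem_filter, Finset.mem_powerset]
    exact ⟨Finset.empty_subset _, fun e he => absurd he (Finset.notMem_empty e),
      fun e he => absurd he (Finset.notMem_empty e)⟩
  obtain ⟨M, hM, hMc⟩ := Finset.exists_mem_eq_sup _ hne Finset.card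
  simp only [Finset.mem_filter, Finset.mem_powerset] at hM
  exact ⟨M, hM.2, hMc.symm⟩

lemma gnu_mono {G H : SimpleGraph V} (h : G ≤ H) : gnu G ≤ gnu H := by
  obtain ⟨M, hM, hc⟩ := exists_max_matching G
  rw [← hc]
  exact card_le_gnu (matching_mono h hM)

lemma delV_le (G : SimpleGraph V) (v : V) : delV G v ≤ G := fun _ _ h => h.1

lemma matching_nonloop {G : SimpleGraph V} {M : Finset (Sym2 V)} (hM : IsGMatching G M)
    {e : Sym2 V} (he : e ∈ M) : ¬ e.IsDiag :=
  G.not_isDiag_of_mem_edgeSet (hM.1 e he)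

/-- decompose an edge of a matching at a covered vertex -/
lemma matching_edge_decomp {G : SimpleGraph V} {M : Finset (Sym2 V)} (hM : IsGMatching G M)
    {e : Sym2 V} (he : e ∈ M) {u : V} (hu : u ∈ e) :
    ∃ y, y ≠ u ∧ e = s(u, y) ∧ (∀ x, x ∈ e ↔ x = u ∨ x = y) := by
  refine ⟨Sym2.Mem.other' hu, ?_, (Sym2.other_spec' hu).symm, ?_⟩
  · intro h
    apply matching_nonloop hM he
    rw [← Sym2.other_spec' hu, h]
    exact Sym2.mk_isDiag_iff.mpr rfl
  · intro x
    conv_lhs => rw [← Sym2.other_spec' hu]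
    exact Sym2.mem_iff

lemma cov_erase {G : SimpleGraph V} {M : Finset (Sym2 V)} (hM : IsGMatching G M)
    {e : Sym2 V} (he : e ∈ M) (x : V) : cov (M.erase e) x ↔ cov M x ∧ x ∉ e := by
  constructor
  · rintro ⟨f, hf, hxf⟩
    have hfM := Finset.mem_of_mem_erase hf
    have hfe := Finset.ne_of_mem_erase hf
    exact ⟨⟨f, hfM, hxf⟩, fun hxe => hM.2 e he f hfM (Ne.symm hfe) x hxe hxf⟩
  · rintro ⟨⟨f, hf, hxf⟩, hxe⟩
    refine ⟨f, Finset.mem_erase.mpr ⟨?_, hf⟩, hxf⟩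
    rintro rfl; exact hxe hxf

lemma cov_insert (M : Finset (Sym2 V)) (e : Sym2 V) (x : V) :
    cov (insert e M) x ↔ cov M x ∨ x ∈ e := by
  constructor
  · rintro ⟨f, hf, hxf⟩
    rcases Finset.mem_insert.mp hf with rfl | hf
    · exact Or.inr hxf
    · exact Or.inl ⟨f, hf, hxf⟩
  · rintro (⟨f, hf, hxf⟩ | hxe)
    · exact ⟨f, Finset.mem_insert_of_mem hf, hxf⟩
    · exact ⟨e, Finset.mem_insert_self e M, hxe⟩

lemma matching_insert {G : SimpleGraph V} {M : Finset (Sym2 V)} (hM : IsGMatching G M)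
    {a b : V} (hab : G.Adj a b) (ha : ¬ cov M a) (hb : ¬ cov M b) :
    IsGMatching G (insert s(a,b) M) ∧ (insert s(a,b) M).card = M.card + 1 := by
  have hnm : s(a,b) ∉ M := fun h => ha ⟨s(a,b), h, Sym2.mem_mk_left a b⟩
  constructor
  · constructor
    · intro e he
      rcases Finset.mem_insert.mp he with rfl | he
      · exact G.mem_edgeSet.mpr hab
      · exact hM.1 e he
    · have key : ∀ f ∈ M, ∀ v, v ∈ s(a,b) → v ∉ f := by
        intro f hf v hv hvf
        rcases Sym2.mem_iff.mp hv with rfl | rfl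
        · exact ha ⟨f, hf, hvf⟩
        · exact hb ⟨f, hf, hvf⟩
      intro e he f hf hne v hv hvf
      rcases Finset.mem_insert.mp he with rfl | he
      · rcases Finset.mem_insert.mp hf with rfl | hf
        · exact hne rfl
        · exact key f hf v hv hvf
      · rcases Finset.mem_insert.mp hf with rfl | hf
        · exact key e he v hvf hv
        · exact hM.2 e he f hf hne v hv hvf
  · exact Finset.card_insert_of_notMem hnm

lemma mem_delV_edgeSet {G : SimpleGraph V} {v : V} {e : Sym2 V} :
    e ∈ (delV G v).edgeSet ↔ e ∈ G.edgeSet ∧ v ∉ e := by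
  induction e using Sym2.ind with
  | _ x y =>
    simp only [SimpleGraph.mem_edgeSet, Sym2.mem_iff]
    show (G.Adj x y ∧ x ≠ v ∧ y ≠ v) ↔ _
    constructor
    · rintro ⟨h, hx, hy⟩
      exact ⟨h, by rintro (rfl | rfl) <;> simp_all⟩
    · rintro ⟨h, hv⟩
      exact ⟨h, fun hx => hv (Or.inl hx.symm), fun hy => hv (Or.inr hy.symm)⟩

lemma matching_delV_iff {G : SimpleGraph V} {v : V} {M : Finset (Sym2 V)} :
    IsGMatching (delV G v) M ↔ IsGMatching G M ∧ ¬ cov M v := by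
  constructor
  · intro hM
    refine ⟨matching_mono (delV_le G v) hM, ?_⟩
    rintro ⟨e, he, hve⟩
    exact (mem_delV_edgeSet.mp (hM.1 e he)).2 hve
  · rintro ⟨hM, hv⟩
    refine ⟨fun e he => mem_delV_edgeSet.mpr ⟨hM.1 e he, fun hve => hv ⟨e, he, hve⟩⟩, hM.2⟩

lemma gnu_delV_le {G : SimpleGraph V} {v : V} : gnu (delV G v) ≤ gnu G :=
  gnu_mono (delV_le G v)

lemma gnu_le_gnu_delV_succ (G : SimpleGraph V) (v : V) : gnu G ≤ gnu (delV G v) + 1 := by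
  obtain ⟨M, hM, hc⟩ := exists_max_matching G
  by_cases hv : cov M v
  · obtain ⟨e, he, hve⟩ := hv
    have h1 : IsGMatching (delV G v) (M.erase e) := by
      rw [matching_delV_iff]
      refine ⟨matching_subset (Finset.erase_subset e M) hM, ?_⟩
      rw [cov_erase hM he]
      tauto
    have h2 : (M.erase e).card ≤ gnu (delV G v) := card_le_gnu h1
    have h3 : (M.erase e).card + 1 = M.card := Finset.card_erase_add_one he
    omega
  · have h1 : IsGMatching (delV G v) M := matching_delV_iff.mpr ⟨hM, hv⟩
    have := card_le_gnu h1
    omega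

lemma mem_Dset_iff {G : SimpleGraph V} {v : V} :
    v ∈ Dset G ↔ ∃ M, IsGMatching G M ∧ M.card = gnu G ∧ ¬ cov M v := by
  constructor
  · intro hv
    obtain ⟨M, hM, hc⟩ := exists_max_matching (delV G v)
    rw [matching_delV_iff] at hM
    exact ⟨M, hM.1, by rw [hc]; exact hv, hM.2⟩
  · rintro ⟨M, hM, hc, hv⟩
    have h1 : IsGMatching (delV G v) M := matching_delV_iff.mpr ⟨hM, hv⟩
    have h2 := card_le_gnu h1
    exact le_antisymm gnu_delV_le (by omega)

lemma gnu_delV_of_not_mem_Dset {G : SimpleGraph V} {v : V} (hv : v ∉ Dset G) :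
    gnu (delV G v) + 1 = gnu G := by
  have h1 : gnu (delV G v) ≠ gnu G := hv
  have h2 := @gnu_delV_le _ _ _ G v
  have h3 := gnu_le_gnu_delV_succ G v
  omega

/-- The alternating-path exchange lemma. Given matchings `M`, `N` and a vertex `u` exposed by
`M` but covered by `N`, walking the `M`/`N`-alternating path from `u` yields either a "balanced"
exchange or an "augmenting" exchange. -/
lemma REC (G : SimpleGraph V) : ∀ (n : ℕ) (N M : Finset (Sym2 V)), N.card ≤ n →
    IsGMatching G M → IsGMatching G N → ∀ u, ¬ cov M u → cov N u →
    ∃ w, w ≠ u ∧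
      ((¬ cov N w ∧ cov M w ∧ ∃ M' N',
          IsGMatching G M' ∧ IsGMatching G N' ∧ M'.card = M.card ∧ N'.card = N.card ∧
          (∀ x, cov M' x ↔ (cov M x ∨ x = u) ∧ x ≠ w) ∧
          (∀ x, cov N' x ↔ (cov N x ∨ x = w) ∧ x ≠ u) ∧
          M ∩ N ⊆ N' ∧ ∃ g, g ∈ N' ∧ g ∈ M ∧ g ∉ N)
       ∨ (¬ cov M w ∧ cov N w ∧ ∃ M' N',
          IsGMatching G M' ∧ IsGMatching G N' ∧ M'.card = M.card + 1 ∧ N'.card + 1 = N.card ∧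
          (∀ x, cov M' x ↔ cov M x ∨ x = u ∨ x = w) ∧
          (∀ x, cov N' x ↔ cov N x ∧ x ≠ u ∧ x ≠ w))) := by
  intro n
  induction n with
  | zero =>
    intro N M hn _ _ u _ hucov
    obtain ⟨e, heN, _⟩ := hucov
    simp [Finset.card_eq_zero.mp (Nat.le_zero.mp hn)] at heN
  | succ n ih =>
    intro N M hn hM hN u hu hucov
    obtain ⟨e, heN, hue⟩ := hucov
    obtain ⟨y, hyu, hey, hemem⟩ := matching_edge_decomp hN heN hue
    have hye2 : y ∈ e := (hemem y).mpr (Or.inr rfl)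
    have heM : e ∉ M := fun h => hu ⟨e, h, hue⟩
    have hAdjuy : G.Adj u y := by
      have := hN.1 e heN
      rw [hey, SimpleGraph.mem_edgeSet] at this
      exact this
    by_cases hyM : cov M y
    case neg =>
      -- base augmenting case : P = {e}
      refine ⟨y, hyu, Or.inr ⟨hyM, ⟨e, heN, hye2⟩, insert e M, N.erase e, ?_, ?_, ?_, ?_, ?_, ?_⟩⟩
      · rw [hey]; exact (matching_insert hM hAdjuy hu hyM).1
      · exact matching_subset (Finset.erase_subset e N) hN
      · rw [Finset.card_insert_of_notMem heM]
      · exact Finset.card_erase_add_one heN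
      · intro x
        rw [cov_insert]
        constructor
        · rintro (h | h)
          · exact Or.inl h
          · rcases (hemem x).mp h with rfl | rfl
            · exact Or.inr (Or.inl rfl)
            · exact Or.inr (Or.inr rfl)
        · rintro (h | rfl | rfl)
          · exact Or.inl h
          · exact Or.inr ((hemem _).mpr (Or.inl rfl))
          · exact Or.inr hye2
      · intro x
        rw [cov_erase hN heN]
        constructor
        · rintro ⟨h1, h2⟩
          exact ⟨h1, fun h => h2 (h ▸ hue), fun h => h2 (h ▸ hye2)⟩
        · rintro ⟨h1, h2, h3⟩
          refine ⟨h1, fun hx => ?_⟩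
          rcases (hemem x).mp hx with rfl | rfl
          · exact h2 rfl
          · exact h3 rfl
    case pos =>
      obtain ⟨f, hfM, hyf⟩ := hyM
      obtain ⟨z, hzy, hfz, hfmem⟩ := matching_edge_decomp hM hfM hyf
      have hzf : z ∈ f := (hfmem z).mpr (Or.inr rfl)
      have hzu : z ≠ u := by
        rintro rfl; exact hu ⟨f, hfM, hzf⟩
      have hfe : f ≠ e := by
        intro h
        rcases (hemem z).mp (h ▸ hzf) with rfl | rfl
        · exact hzu rfl
        · exact hzy rfl
      have hfN : f ∉ N := by
        intro h
        exact hfe (matching_eq_of_mem hN h heN hyf hye2)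
      have hAdjyz : G.Adj y z := by
        have := hM.1 f hfM
        rw [hfz, SimpleGraph.mem_edgeSet] at this
        exact this
      have covM1 : ∀ x, cov (M.erase f) x ↔ cov M x ∧ x ≠ y ∧ x ≠ z := by
        intro x
        rw [cov_erase hM hfM]
        constructor
        · rintro ⟨h1, h2⟩
          exact ⟨h1, fun h => h2 (h ▸ hyf), fun h => h2 (h ▸ hzf)⟩
        · rintro ⟨h1, h2, h3⟩
          refine ⟨h1, fun hx => ?_⟩
          rcases (hfmem x).mp hx with rfl | rfl
          · exact h2 rfl
          · exact h3 rfl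
      have covN1 : ∀ x, cov (N.erase e) x ↔ cov N x ∧ x ≠ u ∧ x ≠ y := by
        intro x
        rw [cov_erase hN heN]
        constructor
        · rintro ⟨h1, h2⟩
          exact ⟨h1, fun h => h2 (h ▸ hue), fun h => h2 (h ▸ hye2)⟩
        · rintro ⟨h1, h2, h3⟩
          refine ⟨h1, fun hx => ?_⟩
          rcases (hemem x).mp hx with rfl | rfl
          · exact h2 rfl
          · exact h3 rfl
      have hM1 : IsGMatching G (M.erase f) := matching_subset (Finset.erase_subset f M) hM
      have hN1 : IsGMatching G (N.erase e) := matching_subset (Finset.erase_subset e N) hN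
      have hcovMu : ¬ cov M u := hu
      have hcovM1y : ¬ cov (M.erase f) y := by rw [covM1]; tauto
      have hcovM1z : ¬ cov (M.erase f) z := by rw [covM1]; tauto
      have hcovM1u : ¬ cov (M.erase f) u := by rw [covM1]; tauto
      have hcovN1u : ¬ cov (N.erase e) u := by rw [covN1]; tauto
      have hcovN1y : ¬ cov (N.erase e) y := by rw [covN1]; tauto
      have hcovMy : cov M y := ⟨f, hfM, hyf⟩
      have hcovMz : cov M z := ⟨f, hfM, hzf⟩
      have hcovNu : cov N u := ⟨e, heN, hue⟩
      have hcovNy : cov N y := ⟨e, heN, hye2⟩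
      by_cases hzN : cov N z
      case neg =>
        -- base balanced case : P = {e, f}, w = z
        refine ⟨z, hzu, Or.inl ⟨hzN, hcovMz, insert e (M.erase f), insert f (N.erase e),
          ?_, ?_, ?_, ?_, ?_, ?_, ?_, ⟨f, Finset.mem_insert_self f _, hfM, hfN⟩⟩⟩
        · rw [hey]; exact (matching_insert hM1 hAdjuy hcovM1u hcovM1y).1
        · rw [hfz]; exact (matching_insert hN1 hAdjyz hcovN1y (by rw [covN1]; tauto)).1
        · have h1 : e ∉ M.erase f := fun h => heM (Finset.mem_of_mem_erase h)
          rw [Finset.card_insert_of_notMem h1]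
          have := Finset.card_erase_add_one hfM
          omega
        · have h1 : f ∉ N.erase e := fun h => hfN (Finset.mem_of_mem_erase h)
          rw [Finset.card_insert_of_notMem h1]
          have := Finset.card_erase_add_one heN
          omega
        · intro x
          rw [cov_insert, covM1 x]
          have hxe : x ∈ e ↔ x = u ∨ x = y := hemem x
          rcases eq_or_ne x u with rfl | hxu
          · first | (simp_all; done) | (simp_all [eq_comm]; done) | (simp_all; tauto)
          rcases eq_or_ne x y with rfl | hxy
          · first | (simp_all; done) | (simp_all [eq_comm]; done) | (simp_all; tauto)
          rcases eq_or_ne x z with rfl | hxz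
          · first | (simp_all; done) | (simp_all [eq_comm]; done) | (simp_all; tauto)
          · first | (simp_all; done) | (simp_all [eq_comm]; done) | (simp_all; tauto)
        · intro x
          rw [cov_insert, covN1 x]
          have hxf : x ∈ f ↔ x = y ∨ x = z := hfmem x
          rcases eq_or_ne x u with rfl | hxu
          · first | (simp_all; done) | (simp_all [eq_comm]; done) | (simp_all; tauto)
          rcases eq_or_ne x y with rfl | hxy
          · first | (simp_all; done) | (simp_all [eq_comm]; done) | (simp_all; tauto)
          rcases eq_or_ne x z with rfl | hxz
          · first | (simp_all; done) | (simp_all [eq_comm]; done) | (simp_all; tauto)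
          · first | (simp_all; done) | (simp_all [eq_comm]; done) | (simp_all; tauto)
        · intro g hg
          rw [Finset.mem_inter] at hg
          have hge : g ≠ e := fun h => heM (h ▸ hg.1)
          exact Finset.mem_insert_of_mem (Finset.mem_erase.mpr ⟨hge, hg.2⟩)
      case pos =>
        -- recursive case
        have hcard : (N.erase e).card ≤ n := by
          have := Finset.card_erase_add_one heN
          omega
        have hcovN1z : cov (N.erase e) z := by rw [covN1]; exact ⟨hzN, hzu, hzy⟩
        obtain ⟨w, hwz, hcase⟩ := ih (N.erase e) (M.erase f) hcard hM1 hN1 z hcovM1z hcovN1z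
        clear ih hn
        rcases hcase with ⟨hwN1, hwM1, M1', N1', hM1', hN1', hcM1', hcN1', hcovM1', hcovN1',
            hsub1, g, hgN1', hgM1, hgN1⟩ |
          ⟨hwM1, hwN1, M1', N1', hM1', hN1', hcM1', hcN1', hcovM1', hcovN1'⟩
        · -- balanced from recursion
          have hwMcov : cov M w ∧ w ≠ y ∧ w ≠ z := (covM1 w).mp hwM1
          have hwu : w ≠ u := fun h => hu (h ▸ hwMcov.1)
          have hwN : ¬ cov N w := by
            intro h
            exact hwN1 ((covN1 w).mpr ⟨h, hwu, hwMcov.2.1⟩)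
          have hcovM1'u : ¬ cov M1' u := by
            rw [hcovM1' u, covM1 u]; tauto
          have hcovM1'y : ¬ cov M1' y := by
            rw [hcovM1' y, covM1 y]
            push_neg
            intro h
            exact absurd rfl (by tauto)
          have hcovN1'y : ¬ cov N1' y := by
            rw [hcovN1' y, covN1 y]
            push_neg
            rintro (h | rfl)
            · exact absurd rfl (by tauto)
            · exact absurd hwMcov.2.1 (by simp)
          have hcovN1'z : ¬ cov N1' z := by simp [hcovN1' z]
          refine ⟨w, hwu, Or.inl ⟨hwN, hwMcov.1, insert e M1', insert f N1',
            ?_, ?_, ?_, ?_, ?_, ?_, ?_, ⟨f, Finset.mem_insert_self f _, hfM, hfN⟩⟩⟩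
          · rw [hey]; exact (matching_insert hM1' hAdjuy hcovM1'u hcovM1'y).1
          · rw [hfz]; exact (matching_insert hN1' hAdjyz hcovN1'y hcovN1'z).1
          · have h1 : e ∉ M1' := fun h => hcovM1'u ⟨e, h, hue⟩
            rw [Finset.card_insert_of_notMem h1, hcM1']
            have := Finset.card_erase_add_one hfM
            omega
          · have h1 : f ∉ N1' := fun h => hcovN1'y ⟨f, h, hyf⟩
            rw [Finset.card_insert_of_notMem h1, hcN1']
            have := Finset.card_erase_add_one heN
            omega
          · intro x
            rw [cov_insert, hcovM1' x, covM1 x]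
            have hxe : x ∈ e ↔ x = u ∨ x = y := hemem x
            obtain ⟨hwM, hwy, hwz'⟩ := hwMcov
            rcases eq_or_ne x u with rfl | hxu
            · first | (simp_all; done) | (simp_all [eq_comm]; done) | (simp_all; tauto)
            rcases eq_or_ne x y with rfl | hxy
            · first | (simp_all; done) | (simp_all [eq_comm]; done) | (simp_all; tauto)
            rcases eq_or_ne x z with rfl | hxz
            · first | (simp_all; done) | (simp_all [eq_comm]; done) | (simp_all; tauto)
            rcases eq_or_ne x w with rfl | hxw
            · first | (simp_all; done) | (simp_all [eq_comm]; done) | (simp_all; tauto)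
            · first | (simp_all; done) | (simp_all [eq_comm]; done) | (simp_all; tauto)
          · intro x
            rw [cov_insert, hcovN1' x, covN1 x]
            have hxf : x ∈ f ↔ x = y ∨ x = z := hfmem x
            obtain ⟨hwM, hwy, hwz'⟩ := hwMcov
            rcases eq_or_ne x u with rfl | hxu
            · first | (simp_all; done) | (simp_all [eq_comm]; done) | (simp_all; tauto)
            rcases eq_or_ne x y with rfl | hxy
            · first | (simp_all; done) | (simp_all [eq_comm]; done) | (simp_all; tauto)
            rcases eq_or_ne x z with rfl | hxz
            · first | (simp_all; done) | (simp_all [eq_comm]; done) | (simp_all; tauto)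
            rcases eq_or_ne x w with rfl | hxw
            · first | (simp_all; done) | (simp_all [eq_comm]; done) | (simp_all; tauto)
            · first | (simp_all; done) | (simp_all [eq_comm]; done) | (simp_all; tauto)
          · intro g' hg'
            rw [Finset.mem_inter] at hg'
            have hg'e : g' ≠ e := fun h => heM (h ▸ hg'.1)
            have hg'f : g' ≠ f := fun h => hfN (h ▸ hg'.2)
            have : g' ∈ M.erase f ∩ N.erase e :=
              Finset.mem_inter.mpr ⟨Finset.mem_erase.mpr ⟨hg'f, hg'.1⟩,
                Finset.mem_erase.mpr ⟨hg'e, hg'.2⟩⟩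
            exact Finset.mem_insert_of_mem (hsub1 this)
        · -- augmenting from recursion
          have hwN1cov : cov (N.erase e) w := hwN1
          have hwNcov : cov N w ∧ w ≠ u ∧ w ≠ y := (covN1 w).mp hwN1cov
          obtain ⟨hwN, hwu, hwy⟩ := hwNcov
          have hwM : ¬ cov M w := by
            intro h
            exact hwM1 ((covM1 w).mpr ⟨h, hwy, hwz⟩)
          have hcovM1'u : ¬ cov M1' u := by
            rw [hcovM1' u]
            push_neg
            rw [covM1 u]
            refine ⟨by tauto, hzu.symm, hwu.symm⟩
          have hcovM1'y : ¬ cov M1' y := by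
            rw [hcovM1' y]
            push_neg
            rw [covM1 y]
            refine ⟨by tauto, hzy.symm, hwy.symm⟩
          have hcovN1'y : ¬ cov N1' y := by
            rw [hcovN1' y, covN1 y]
            tauto
          have hcovN1'z : ¬ cov N1' z := by
            rw [hcovN1' z]
            tauto
          refine ⟨w, hwu, Or.inr ⟨hwM, hwN, insert e M1', insert f N1', ?_, ?_, ?_, ?_, ?_, ?_⟩⟩
          · rw [hey]; exact (matching_insert hM1' hAdjuy hcovM1'u hcovM1'y).1
          · rw [hfz]; exact (matching_insert hN1' hAdjyz hcovN1'y hcovN1'z).1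
          · have h1 : e ∉ M1' := fun h => hcovM1'u ⟨e, h, hue⟩
            rw [Finset.card_insert_of_notMem h1, hcM1']
            have := Finset.card_erase_add_one hfM
            omega
          · have h1 : f ∉ N1' := fun h => hcovN1'y ⟨f, h, hyf⟩
            rw [Finset.card_insert_of_notMem h1]
            have h2 := Finset.card_erase_add_one heN
            omega
          · intro x
            rw [cov_insert, hcovM1' x, covM1 x]
            have hxe : x ∈ e ↔ x = u ∨ x = y := hemem x
            rcases eq_or_ne x u with rfl | hxu
            · first | (simp_all; done) | (simp_all [eq_comm]; done) | (simp_all; tauto)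
            rcases eq_or_ne x y with rfl | hxy
            · first | (simp_all; done) | (simp_all [eq_comm]; done) | (simp_all; tauto)
            rcases eq_or_ne x z with rfl | hxz
            · first | (simp_all; done) | (simp_all [eq_comm]; done) | (simp_all; tauto)
            rcases eq_or_ne x w with rfl | hxw
            · first | (simp_all; done) | (simp_all [eq_comm]; done) | (simp_all; tauto)
            · first | (simp_all; done) | (simp_all [eq_comm]; done) | (simp_all; tauto)
          · intro x
            rw [cov_insert, hcovN1' x, covN1 x]
            have hxf : x ∈ f ↔ x = y ∨ x = z := hfmem x
            rcases eq_or_ne x u with rfl | hxu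
            · first | (simp_all; done) | (simp_all [eq_comm]; done) | (simp_all; tauto)
            rcases eq_or_ne x y with rfl | hxy
            · first | (simp_all; done) | (simp_all [eq_comm]; done) | (simp_all; tauto)
            rcases eq_or_ne x z with rfl | hxz
            · first | (simp_all; done) | (simp_all [eq_comm]; done) | (simp_all; tauto)
            rcases eq_or_ne x w with rfl | hxw
            · first | (simp_all; done) | (simp_all [eq_comm]; done) | (simp_all; tauto)
            · first | (simp_all; done) | (simp_all [eq_comm]; done) | (simp_all; tauto)

lemma delV_comm (G : SimpleGraph V) (a v : V) : delV (delV G a) v = delV (delV G v) a := by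
  ext x y
  show (G.Adj x y ∧ x ≠ a ∧ y ≠ a) ∧ x ≠ v ∧ y ≠ v ↔ (G.Adj x y ∧ x ≠ v ∧ y ≠ v) ∧ x ≠ a ∧ y ≠ a
  tauto

lemma delV_delV_self (G : SimpleGraph V) (a : V) : delV (delV G a) a = delV G a := by
  ext x y
  show (G.Adj x y ∧ x ≠ a ∧ y ≠ a) ∧ x ≠ a ∧ y ≠ a ↔ G.Adj x y ∧ x ≠ a ∧ y ≠ a
  tauto

/-- The stability lemma: for `a ∈ A(G)`, `D(G - a) = D(G) ∪ {a}`. -/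
lemma Dset_delV (G : SimpleGraph V) {a : V} (ha : a ∈ Aset G) :
    Dset (delV G a) = Dset G ∪ {a} := by
  obtain ⟨haD, d, hdD, had⟩ := ha
  have hgnua : gnu (delV G a) + 1 = gnu G := gnu_delV_of_not_mem_Dset haD
  ext v
  simp only [Set.mem_union, Set.mem_singleton_iff]
  constructor
  · intro hv
    -- hard direction
    by_cases hva : v = a
    · exact Or.inr hva
    left
    by_cases hvd : v = d
    · exact hvd ▸ hdD
    -- get a maximum matching M of G - a missing v
    obtain ⟨M, hM, hMc, hMv⟩ := mem_Dset_iff.mp hv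
    have hMG : IsGMatching G M := matching_mono (delV_le _ _) hM
    have hMa : ¬ cov M a := by
      rintro ⟨e, he, hae⟩
      exact (mem_delV_edgeSet.mp (hM.1 e he)).2 hae
    -- get a maximum matching N of G missing d
    obtain ⟨N, hN, hNc, hNd⟩ := mem_Dset_iff.mp hdD
    by_cases hNv : cov N v
    case neg => exact mem_Dset_iff.mpr ⟨N, hN, hNc, hNv⟩
    -- alternate from v
    obtain ⟨w, hwv, hcase⟩ := REC G N.card N M le_rfl hMG hN v hMv hNv
    rcases hcase with ⟨hwN, hwM, M', N', hM', hN', hcM', hcN', hcovM', hcovN', _, _⟩ |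
      ⟨hwM, hwN, M', N', hM', hN', hcM', hcN', hcovM', hcovN'⟩
    · -- balanced: N' is a maximum matching of G missing v
      refine mem_Dset_iff.mpr ⟨N', hN', by omega, ?_⟩
      rw [hcovN' v]
      simp
    · -- augmenting
      have hwa : w = a := by
        by_contra hwa
        have h1 : ¬ cov M' a := by
          rw [hcovM' a]
          push_neg
          exact ⟨hMa, fun h => hva h.symm, fun h => hwa h.symm⟩
        have h2 : IsGMatching (delV G a) M' := matching_delV_iff.mpr ⟨hM', h1⟩
        have h3 := card_le_gnu h2
        rw [hcM', hMc] at h3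
        omega
      rw [hwa] at hwM hwN hcovM' hcovN'
      -- N' misses v, a and d ; add the edge (a, d)
      have hN'a : ¬ cov N' a := by simp [hcovN' a]
      have hN'd : ¬ cov N' d := by rw [hcovN' d]; tauto
      have hins := matching_insert hN' had hN'a hN'd
      refine mem_Dset_iff.mpr ⟨insert s(a,d) N', hins.1, by rw [hins.2]; omega, ?_⟩
      rw [cov_insert]
      push_neg
      refine ⟨by simp [hcovN' v], ?_⟩
      rw [Sym2.mem_iff]
      push_neg
      exact ⟨hva, hvd⟩
  · rintro (hv | rfl)
    · -- easy direction
      show gnu (delV (delV G a) v) = gnu (delV G a)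
      have h1 : gnu (delV (delV G a) v) ≤ gnu (delV G a) := gnu_delV_le
      have h2 : gnu (delV G v) ≤ gnu (delV (delV G v) a) + 1 := gnu_le_gnu_delV_succ _ a
      rw [← delV_comm] at h2
      have h3 : gnu (delV G v) = gnu G := hv
      omega
    · show gnu (delV (delV G v) v) = gnu (delV G v)
      rw [delV_delV_self]

/-- Delete (isolate) a set of vertices. -/
def delSet (G : SimpleGraph V) (S : Set V) : SimpleGraph V where
  Adj x y := G.Adj x y ∧ x ∉ S ∧ y ∉ S
  symm := ⟨fun _ _ ⟨h, hx, hy⟩ => ⟨h.symm, hy, hx⟩⟩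
  loopless := ⟨fun x h => G.loopless.irrefl x h.1⟩

lemma delSet_empty (G : SimpleGraph V) : delSet G ∅ = G := by
  ext x y
  show G.Adj x y ∧ x ∉ (∅ : Set V) ∧ y ∉ (∅ : Set V) ↔ G.Adj x y
  simp

lemma delSet_insert (G : SimpleGraph V) (S : Set V) (a : V) :
    delSet G (insert a S) = delV (delSet G S) a := by
  ext x y
  show G.Adj x y ∧ x ∉ insert a S ∧ y ∉ insert a S ↔
    (G.Adj x y ∧ x ∉ S ∧ y ∉ S) ∧ x ≠ a ∧ y ≠ a
  simp only [Set.mem_insert_iff]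
  tauto

lemma not_mem_Dset_of_mem_Aset {G : SimpleGraph V} {a : V} (ha : a ∈ Aset G) : a ∉ Dset G :=
  ha.1

lemma delSet_iter (G : SimpleGraph V) (s : Finset V) (hs : ↑s ⊆ Aset G) :
    gnu (delSet G ↑s) + s.card = gnu G ∧ Dset (delSet G ↑s) = Dset G ∪ ↑s := by
  induction s using Finset.induction_on with
  | empty => simp [delSet_empty]
  | @insert a s ha ih =>
    have hsub : ↑s ⊆ Aset G := by
      intro x hx
      exact hs (by simp [hx])
    have haA : a ∈ Aset G := hs (by simp)
    obtain ⟨ih1, ih2⟩ := ih hsub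
    have key : a ∈ Aset (delSet G ↑s) := by
      obtain ⟨haD, d, hdD, had⟩ := haA
      have hdns : d ∉ (s : Set V) := fun hds => (hsub hds).1 hdD
      refine ⟨?_, d, ?_, ⟨had, ?_, hdns⟩⟩
      · rw [ih2]
        rintro (h | h)
        · exact haD h
        · exact ha h
      · rw [ih2]; exact Or.inl hdD
      · exact fun h => ha h
    rw [Finset.coe_insert, delSet_insert]
    have hgnu : gnu (delV (delSet G ↑s) a) + 1 = gnu (delSet G ↑s) :=
      gnu_delV_of_not_mem_Dset (not_mem_Dset_of_mem_Aset key)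
    constructor
    · rw [Finset.card_insert_of_notMem ha]
      omega
    · rw [Dset_delV _ key, ih2]
      ext x
      simp only [Set.mem_union, Set.mem_singleton_iff, Set.mem_insert_iff, Finset.coe_insert]
      tauto

/-- Gallai-type lemma: if every vertex of `S` can be missed by some maximum matching of `H`
(i.e. `S ⊆ D(H)`), and `J` is a graph structure on `S` whose edges are edges of `H`, then a
maximum matching of `H` misses at most one vertex in each `J`-component. -/
lemma one_exposed_per_component (H : SimpleGraph V) (S : Set V) (J : SimpleGraph S)
    (hS : S ⊆ Dset H) (hJ : ∀ a b : S, J.Adj a b → H.Adj a.1 b.1) :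
    ∀ (M : Finset (Sym2 V)), IsGMatching H M → M.card = gnu H →
    ∀ (u w : S), ¬ cov M u.1 → ¬ cov M w.1 → J.Reachable u w → u = w := by
  have Claim : ∀ n, ∀ (M : Finset (Sym2 V)), IsGMatching H M → M.card = gnu H →
      ∀ (u w : S), ¬ cov M u.1 → ¬ cov M w.1 → J.Reachable u w → J.dist u w ≤ n → u = w := by
    intro n
    induction n using Nat.strong_induction_on with
    | _ n ih =>
      intro M hM hMc u w hu hw hreach hdist
      by_contra huw
      have huw1 : u.1 ≠ w.1 := fun h => huw (Subtype.ext h)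
      have hd0 : J.dist u w ≠ 0 := by
        intro h
        rcases SimpleGraph.dist_eq_zero_iff_eq_or_not_reachable.mp h with h | h
        exacts [huw h, h hreach]
      have hd1 : J.dist u w ≠ 1 := by
        intro h
        obtain ⟨p, hp⟩ := hreach.exists_walk_length_eq_dist
        rw [h] at hp
        have hadj : J.Adj u w := by
          cases p with
          | nil => simp at hp
          | cons h' q =>
            cases q with
            | nil => exact h'
            | cons h'' q' => simp [SimpleGraph.Walk.length_cons] at hp
        have hins := matching_insert hM (hJ _ _ hadj) hu hw
        have := card_le_gnu hins.1
        omega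
      obtain ⟨p, hp⟩ := hreach.exists_walk_length_eq_dist
      have hd2 : 2 ≤ J.dist u w := by omega
      cases p with
      | nil => simp at hp; simp at hd2
      | cons hadj q =>
        rename_i t
        have hqlen : q.length + 1 = J.dist u w := by
          simpa [SimpleGraph.Walk.length_cons] using hp
        have hdtw : J.dist t w + 1 ≤ J.dist u w := by
          have := SimpleGraph.dist_le q
          omega
        have hdut : J.dist u t ≤ 1 := by
          have := SimpleGraph.dist_le hadj.toWalk
          simpa using this
        have hut : u ≠ t := hadj.ne
        have hut1 : u.1 ≠ t.1 := fun h => hut (Subtype.ext h)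
        have htw : t ≠ w := by
          intro h
          subst h
          have : J.dist u t ≤ 1 := hdut
          omega
        have htw1 : t.1 ≠ w.1 := fun h => htw (Subtype.ext h)
        have htcov : cov M t.1 := by
          by_contra htcov
          exact htw (ih (J.dist t w) (by omega) M hM hMc t w htcov hw ⟨q⟩ le_rfl)
        have htD : t.1 ∈ Dset H := hS t.2
        obtain ⟨N0, hN0, hN0c, hN0t⟩ := mem_Dset_iff.mp htD
        set cand := (Finset.univ : Finset (Sym2 V)).powerset.filter
          (fun N => IsGMatching H N ∧ N.card = gnu H ∧ ¬ cov N t.1) with hcand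
        have hcand_ne : cand.Nonempty := by
          refine ⟨N0, ?_⟩
          rw [hcand, Finset.mem_filter]
          exact ⟨Finset.mem_powerset.mpr (Finset.subset_univ _), hN0, hN0c, hN0t⟩
        obtain ⟨N, hNmem, hNmax⟩ := Finset.exists_max_image cand (fun N => (M ∩ N).card) hcand_ne
        rw [hcand, Finset.mem_filter] at hNmem
        obtain ⟨-, hN, hNc, hNt⟩ := hNmem
        have hNu : cov N u.1 := by
          by_contra hNu
          exact hut (ih (J.dist u t) (by omega) N hN hNc u t hNu hNt ⟨hadj.toWalk⟩ le_rfl)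
        have hNw : cov N w.1 := by
          by_contra hNw
          exact htw (ih (J.dist t w) (by omega) N hN hNc t w hNt hNw ⟨q⟩ le_rfl)
        obtain ⟨w', hw'u, hcase⟩ := REC H N.card N M le_rfl hM hN u.1 hu hNu
        rcases hcase with ⟨hw'N, hw'M, M', N', hM', hN', hcM', hcN', hcovM', hcovN',
            hsub, g, hgN', hgM, hgN⟩ | ⟨hw'M, hw'N, M', N', hM', hN', hcM', hcN', hcovM', hcovN'⟩
        · by_cases hw't : w' = t.1
          · have hM't : ¬ cov M' t.1 := by
              rw [hcovM' t.1]
              push_neg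
              intro _
              rw [hw't]
            have hM'w : ¬ cov M' w.1 := by
              rw [hcovM' w.1]
              push_neg
              rintro (h | h)
              · exact absurd h hw
              · exact absurd h.symm huw1
            exact htw (ih (J.dist t w) (by omega) M' hM' (by omega) t w hM't hM'w ⟨q⟩ le_rfl)
          · have hN't : ¬ cov N' t.1 := by
              rw [hcovN' t.1]
              push_neg
              rintro (h | h)
              · exact absurd h hNt
              · exact absurd h.symm hw't
            have hN'mem : N' ∈ cand := by
              rw [hcand, Finset.mem_filter]
              exact ⟨Finset.mem_powerset.mpr (Finset.subset_univ _), hN', by omega, hN't⟩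
            have hlt : (M ∩ N).card < (M ∩ N').card := by
              apply Finset.card_lt_card
              constructor
              · intro g' hg'
                rw [Finset.mem_inter] at hg' ⊢
                exact ⟨hg'.1, hsub (Finset.mem_inter.mpr hg')⟩
              · intro hcon
                have : g ∈ M ∩ N := hcon (Finset.mem_inter.mpr ⟨hgM, hgN'⟩)
                rw [Finset.mem_inter] at this
                exact hgN this.2
            have := hNmax N' hN'mem
            omega
        · have := card_le_gnu hM'
          omega
  intro M hM hMc u w hu hw hreach
  exact Claim (J.dist u w) M hM hMc u w hu hw hreach le_rfl

lemma cov_card {G : SimpleGraph V} {M : Finset (Sym2 V)} (hM : IsGMatching G M) :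
    (Finset.univ.filter (fun v => cov M v)).card = 2 * M.card := by
  have hrw : Finset.univ.filter (fun v => cov M v) =
      M.biUnion (fun e => Finset.univ.filter (· ∈ e)) := by
    ext v
    simp only [Finset.mem_filter, Finset.mem_biUnion, Finset.mem_univ, true_and]
    rfl
  have hdisj : ∀ e ∈ M, ∀ f ∈ M, e ≠ f →
      Disjoint (Finset.univ.filter (· ∈ e)) (Finset.univ.filter (· ∈ f)) := by
    intro e he f hf hef
    rw [Finset.disjoint_left]
    intro v hv hv'
    rw [Finset.mem_filter] at hv hv'
    exact hM.2 e he f hf hef v hv.2 hv'.2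
  have htwo : ∀ e ∈ M, (Finset.univ.filter (· ∈ e)).card = 2 := by
    intro e he
    obtain ⟨x, hx⟩ : ∃ x, x ∈ e := by
      induction e using Sym2.ind with
      | _ a b => exact ⟨a, Sym2.mem_mk_left a b⟩
    obtain ⟨y, hyx, hexy, hxy_mem⟩ := matching_edge_decomp hM he hx
    have : Finset.univ.filter (· ∈ e) = {x, y} := by
      ext z
      simp only [Finset.mem_filter, Finset.mem_univ, true_and, Finset.mem_insert,
        Finset.mem_singleton]
      exact hxy_mem z
    rw [this, Finset.card_insert_of_notMem (by simp [hyx.symm]), Finset.card_singleton]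
  rw [hrw, Finset.card_biUnion hdisj, Finset.sum_congr rfl htwo, Finset.sum_const,
    smul_eq_mul, mul_comm]

lemma card_ge_two_gnu_succ {G : SimpleGraph V} {d : V} (hd : d ∈ Dset G) :
    2 * gnu G + 1 ≤ Fintype.card V := by
  obtain ⟨N, hN, hNc, hNd⟩ := mem_Dset_iff.mp hd
  have h1 : (Finset.univ.filter (fun v => cov N v)).card = 2 * N.card := cov_card hN
  have h2 : Finset.univ.filter (fun v => cov N v) ⊆ Finset.univ.erase d := by
    intro v hv
    rw [Finset.mem_filter] at hv
    refine Finset.mem_erase.mpr ⟨?_, Finset.mem_univ v⟩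
    rintro rfl
    exact hNd hv.2
  have h3 := Finset.card_le_card h2
  rw [Finset.card_erase_of_mem (Finset.mem_univ d), Finset.card_univ, h1, hNc] at h3
  have hpos : 0 < Fintype.card V := Fintype.card_pos_iff.mpr ⟨d⟩
  omega

theorem GE_components_gt_A' (G : SimpleGraph V) (hA : (Aset G).Nonempty) :
    (Aset G).ncard < Nat.card ((G.induce (Dset G)).ConnectedComponent) := by
  classical
  set D := Dset G with hD
  set A := Aset G with hAdef
  have hDA : ∀ x, x ∈ A → x ∉ D := fun x hx => hx.1
  -- A and D as finsets
  have hAfin : A.Finite := Set.toFinite A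
  have hDfin : D.Finite := Set.toFinite D
  set Af := hAfin.toFinset with hAf
  set Df := hDfin.toFinset with hDf
  have hAfc : ↑Af = A := hAfin.coe_toFinset
  have hDfc : ↑Df = D := hDfin.coe_toFinset
  -- delete A
  obtain ⟨h1, h2⟩ := delSet_iter G Af (by rw [hAfc])
  rw [hAfc] at h1 h2
  set H := delSet G A with hH
  -- D is nonempty, so G has an exposed vertex
  obtain ⟨a, haA⟩ := hA
  obtain ⟨-, d, hdD, -⟩ := haA
  have hVcard : 2 * gnu G + 1 ≤ Fintype.card V := card_ge_two_gnu_succ hdD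
  -- maximum matching of H
  obtain ⟨M, hM, hMc⟩ := exists_max_matching H
  set U := Finset.univ.filter (fun v => ¬ cov M v) with hU
  have hUcard : U.card + 2 * M.card = Fintype.card V := by
    have := Finset.card_filter_add_card_filter_not (s := (Finset.univ : Finset V))
      (fun v => cov M v)
    rw [cov_card hM, Finset.card_univ] at this
    rw [hU]
    omega
  -- exposed vertices are in D ∪ A
  have hUDA : ∀ v ∈ U, v ∈ D ∨ v ∈ A := by
    intro v hv
    rw [hU, Finset.mem_filter] at hv
    have : v ∈ Dset H := mem_Dset_iff.mpr ⟨M, hM, hMc, hv.2⟩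
    rw [h2] at this
    exact this
  set T := U ∩ Df with hT
  have hUT : U.card ≤ T.card + Af.card := by
    have hsub : U ⊆ T ∪ Af := by
      intro v hv
      rcases hUDA v hv with h | h
      · exact Finset.mem_union_left _ (Finset.mem_inter.mpr ⟨hv, by
          rw [← hDfc] at h; exact h⟩)
      · exact Finset.mem_union_right _ (by rw [← hAfc] at h; exact h)
    calc U.card ≤ (T ∪ Af).card := Finset.card_le_card hsub
      _ ≤ T.card + Af.card := Finset.card_union_le T Af
  -- inject exposed D-vertices into components of G[D]
  have hmemD : ∀ v ∈ T, v ∈ D := by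
    intro v hv
    rw [hT, Finset.mem_inter] at hv
    rw [← hDfc]
    exact hv.2
  have hmemU : ∀ v ∈ T, ¬ cov M v := by
    intro v hv
    rw [hT, Finset.mem_inter, hU, Finset.mem_filter] at hv
    exact hv.1.2
  have hTcard : T.card ≤ Nat.card ((G.induce D).ConnectedComponent) := by
    have hinj : Function.Injective (fun v : ↥(↑T : Set V) =>
        (G.induce D).connectedComponentMk ⟨v.1, hmemD v.1 v.2⟩) := by
      intro v v' heq
      simp only at heq
      have hreach := SimpleGraph.ConnectedComponent.exact heq
      have := one_exposed_per_component H D (G.induce D)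
        (by rw [h2]; exact Set.subset_union_left)
        (fun x y hxy => ⟨hxy, fun hx => hDA x.1 hx x.2, fun hy => hDA y.1 hy y.2⟩)
        M hM hMc ⟨v.1, hmemD v.1 v.2⟩ ⟨v'.1, hmemD v'.1 v'.2⟩
        (hmemU v.1 v.2) (hmemU v'.1 v'.2) hreach
      exact Subtype.ext (congrArg (fun (x : ↥D) => x.1) this)
    have := Nat.card_le_card_of_injective _ hinj
    rwa [Nat.card_coe_set_eq, Set.ncard_coe_finset] at this
  have hAncard : A.ncard = Af.card := by
    rw [← hAfc, Set.ncard_coe_finset]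
  rw [hAncard]
  omega

/-- If `A(G)` is non-empty, then the number of connected components of `G[D]` is strictly
greater than `|A(G)|`. -/
theorem GE_components_gt_A {V : Type} [Fintype V] [DecidableEq V]
    (G : SimpleGraph V) (hA : (Aset G).Nonempty) :
    (Aset G).ncard < Nat.card ((G.induce (Dset G)).ConnectedComponent) :=
  GE_components_gt_A' G hA
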